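/- Let C1, C2 be real numbers with 0 < C1 ≤ 1 and 0 < C2 ≤ 1 such that C1 < 1 or C2 < 1, and let s, t : ℕ → ℝ be the SimRank iterates on K_{2,2} (s 0 = 0, t 0 = 0, s (k+1) = (C2/2)·(1 + t k), t (k+1) = (C1/2)·(1 + s k)). Then the sequence s converges to some limit L ∈ ℝ with L < C2; that is, the limiting SimRank similarity of the two ads in K_{1,2} (which equals C2) is strictly greater than the limiting SimRank similarity of the two ads in K_{2,2}. -/

import Mathlib

theorem simrank_K22_limit_lt_K12
    (C1 C2 : ℝ) (hC1 : 0 < C1) (hC1' : C1 ≤ 1) (hC2 : 0 < C2) (hC2' : C2 ≤ 1)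
    (hlt : C1 < 1 ∨ C2 < 1)
    (s t : ℕ → ℝ)
    (hs0 : s 0 = 0) (ht0 : t 0 = 0)
    (hs : ∀ k, s (k + 1) = (C2 / 2) * (1 + t k))
    (ht : ∀ k, t (k + 1) = (C1 / 2) * (1 + s k)) :
    ∃ L : ℝ, Filter.Tendsto s Filter.atTop (nhds L) ∧ L < C2 := by
  have hden : 0 < 4 - C1 * C2 := by nlinarith
  set L : ℝ := C2 * (2 + C1) / (4 - C1 * C2) with hL
  have hLfix : L = C2 / 2 * (1 + C1 / 2 * (1 + L)) := by
    rw [hL]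
    have e := div_mul_cancel₀ (C2 * (2 + C1)) hden.ne'
    linear_combination (1 / 4 : ℝ) * e
  have hrec : ∀ k, s (k + 2) - L = (C1 * C2 / 4) * (s k - L) := by
    intro k
    rw [hs (k + 1), ht k]
    linear_combination -hLfix
  set A : ℝ := max |s 0 - L| (2 * |s 1 - L|) with hA
  have hq : |C1 * C2 / 4| ≤ 1 / 4 := by
    rw [abs_of_nonneg (by positivity)]; nlinarith
  have key : ∀ k, |s k - L| ≤ A * (1 / 2) ^ k ∧ |s (k + 1) - L| ≤ A * (1 / 2) ^ (k + 1) := by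
    intro k
    induction k with
    | zero =>
      constructor
      · rw [pow_zero, mul_one]; exact le_max_left _ _
      · have h := le_max_right |s 0 - L| (2 * |s 1 - L|)
        rw [pow_one]
        linarith
    | succ n ih =>
      refine ⟨ih.2, ?_⟩
      rw [show n + 1 + 1 = n + 2 from rfl, hrec n, abs_mul]
      calc |C1 * C2 / 4| * |s n - L| ≤ (1 / 4) * (A * (1 / 2) ^ n) :=
            mul_le_mul hq ih.1 (abs_nonneg _) (by norm_num)
        _ = A * (1 / 2) ^ (n + 2) := by ring
  have htend0 : Filter.Tendsto (fun k => A * (1 / 2 : ℝ) ^ k) Filter.atTop (nhds 0) := by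
    simpa using (tendsto_pow_atTop_nhds_zero_of_lt_one (by norm_num) (by norm_num : (1 / 2 : ℝ) < 1)).const_mul A
  have hsub : Filter.Tendsto (fun k => s k - L) Filter.atTop (nhds 0) :=
    squeeze_zero_norm (fun k => by simpa [Real.norm_eq_abs] using (key k).1) htend0
  have hst : Filter.Tendsto s Filter.atTop (nhds L) := by
    have h2 := hsub.add_const L
    simpa using h2
  refine ⟨L, hst, ?_⟩
  rw [hL, div_lt_iff₀ hden]
  have h2 : 0 < 2 - C1 - C1 * C2 := by
    rcases hlt with h | h
    · nlinarith
    · nlinarith [mul_lt_mul_of_pos_left h hC1]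
  nlinarith [mul_pos hC2 h2]
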